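/- Let n be a positive integer with n ≡ 0 (mod 4) and set k = n/2. Then there exists a sequence of integers l_1, …, l_{n−1} such that: l_1 = k; for 2 ≤ t ≤ n−1, 1 ≤ |l_t| ≤ k−1; for each j ∈ {1,…,k−1} there are exactly two indices t with |l_t| = j, and for these two indices the values l_t are equal; the partial sums S_0 = 0 and S_t = l_1 + ⋯ + l_t for 1 ≤ t ≤ n−2 are pairwise distinct modulo n; S_{n−1} ≡ 0 (mod n); and whenever t ≠ t' with l_t = l_{t'}, the partial sums S_{t−1} and S_{t'−1} have opposite parity (S_{t−1} ≢ S_{t'−1} (mod 2)). -/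

import Mathlib

set_option maxHeartbeats 4000000

namespace EdgeLenSeqAux

/-- Closed form for the partial sums `S_t` of the edge-length sequence, where `n = 4*m`. -/
def S (m t : ℕ) : ℤ :=
  if t % 4 = 0 then
    (if t = 0 then 0 else
      if 2 * (t / 4) + 1 ≤ m then 2*(m:ℤ) - 2*((t/4 : ℕ) : ℤ)
      else 6*(m:ℤ) - 2*((t/4 : ℕ) : ℤ) - 1)
  else if t % 4 = 1 then
    (if t = 1 then 2*(m:ℤ) else 2*(m:ℤ) + 2*((t/4 : ℕ) : ℤ) + 1)
  else if t % 4 = 2 then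
    (if t = 2 then 2*(m:ℤ) + 1 else
      if 2 * (t / 4) + 1 ≤ m then 2*(m:ℤ) - 2*((t/4 : ℕ) : ℤ) + 1
      else 6*(m:ℤ) - 2*((t/4 : ℕ) : ℤ))
  else 2*(m:ℤ) + 2*((t/4 : ℕ) : ℤ) + 2

/-- The edge-length sequence. -/
def L (m t : ℕ) : ℤ := S m t - S m (t - 1)

lemma S_zero (m : ℕ) : S m 0 = 0 := by norm_num [S]

lemma sum_L (m t : ℕ) : ∑ i ∈ Finset.Icc 1 t, L m i = S m t := by
  induction t with
  | zero => simpa using (S_zero m).symm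
  | succ t ih =>
      rw [Finset.sum_Icc_succ_top (by omega : 1 ≤ t + 1), ih]
      simp only [L, Nat.add_sub_cancel]
      omega

lemma L_one (m : ℕ) : L m 1 = 2*(m:ℤ) := by norm_num [L, S]

lemma L_bound (m t : ℕ) (hm : 1 ≤ m) (h2 : 2 ≤ t) (ht : t ≤ 4*m - 1) :
    1 ≤ (L m t).natAbs ∧ (L m t).natAbs ≤ 2*m - 1 := by
  simp only [L, S]; split_ifs <;> omega

lemma L_sign (m t : ℕ) (hm : 1 ≤ m) (h2 : 2 ≤ t) (ht : t ≤ 4*m - 1) :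
    0 ≤ L m t ↔ (L m t).natAbs % 2 = 1 := by
  simp only [L, S]; split_ifs <;> omega

lemma mag1 (m t : ℕ) (hm : 1 ≤ m) (h1 : 1 ≤ t) (ht : t ≤ 4*m - 1) :
    (L m t).natAbs = 1 ↔ (t = 2 ∨ t = 3) := by
  simp only [L, S]; split_ifs <;> omega

lemma magA (m t j : ℕ) (hm : 1 ≤ m) (h1 : 1 ≤ t) (ht : t ≤ 4*m - 1)
    (hj1 : 2 ≤ j) (hj2 : j ≤ 2*m - 1) (hj4 : j % 4 ≤ 1) :
    (L m t).natAbs = j ↔ (t = j ∨ t = j + 2) := by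
  simp only [L, S]; split_ifs <;> omega

lemma magB (m t j : ℕ) (hm : 1 ≤ m) (h1 : 1 ≤ t) (ht : t ≤ 4*m - 1)
    (hj1 : 2 ≤ j) (hj2 : j ≤ 2*m - 1) (hj4 : 2 ≤ j % 4) :
    (L m t).natAbs = j ↔ (t = 4*m - j - 1 ∨ t = 4*m - j + 1) := by
  simp only [L, S]; split_ifs <;> omega

lemma S_bound (m t : ℕ) (hm : 1 ≤ m) (ht : t ≤ 4*m - 1) :
    0 ≤ S m t ∧ S m t ≤ 6*(m:ℤ) := by
  simp only [S]; split_ifs <;> omega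

lemma S_top (m : ℕ) (hm : 1 ≤ m) : S m (4*m - 1) = 4*(m:ℤ) := by
  simp only [S]; split_ifs <;> omega

/-- Parity characterization of `S`. -/
lemma S_parity (m t : ℕ) :
    S m t % 2 = 0 ↔
      ((t % 4 = 3) ∨ (t % 4 = 0 ∧ (t = 0 ∨ 2*(t/4) + 1 ≤ m)) ∨
       (t % 4 = 1 ∧ t = 1) ∨ (t % 4 = 2 ∧ t ≠ 2 ∧ m < 2*(t/4) + 1)) := by
  simp only [S]; split_ifs <;> omega

lemma filter_eq (m j a b : ℕ) (ha1 : 1 ≤ a) (ha2 : a ≤ 4*m - 1)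
    (hb1 : 1 ≤ b) (hb2 : b ≤ 4*m - 1) (hab : a ≠ b)
    (hiff : ∀ t, 1 ≤ t → t ≤ 4*m - 1 → ((L m t).natAbs = j ↔ (t = a ∨ t = b))) :
    ((Finset.Icc 1 (4*m - 1)).filter (fun t => (L m t).natAbs = j)).card = 2 := by
  have hset : (Finset.Icc 1 (4*m - 1)).filter (fun t => (L m t).natAbs = j) = {a, b} := by
    ext t
    simp only [Finset.mem_filter, Finset.mem_Icc, Finset.mem_insert, Finset.mem_singleton]
    constructor
    · rintro ⟨⟨h1, h2⟩, h3⟩; exact (hiff t h1 h2).mp h3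
    · rintro (h | h)
      · subst h; exact ⟨⟨ha1, ha2⟩, (hiff _ ha1 ha2).mpr (Or.inl rfl)⟩
      · subst h; exact ⟨⟨hb1, hb2⟩, (hiff _ hb1 hb2).mpr (Or.inr rfl)⟩
  rw [hset, Finset.card_insert_of_notMem (by simp [hab]), Finset.card_singleton]

end EdgeLenSeqAux

open EdgeLenSeqAux in
/-- For `n ≡ 0 (mod 4)` and `k = n/2`, there is a sequence of integer edge lengths
`l_1, …, l_{n-1}` with `l_1 = k`, `1 ≤ |l_t| ≤ k-1` for `t ≥ 2`, each magnitude
`j ∈ {1,…,k-1}` occurring exactly twice and with equal values, partial sums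
`S_0, …, S_{n-2}` pairwise distinct mod `n`, total sum `≡ 0 (mod n)`, and the two edges of
each repeated length starting at vertices of opposite parity. -/
theorem exists_edge_length_sequence_of_four_dvd (n k : ℕ) (hn : 0 < n) (h4 : n % 4 = 0)
    (hk : k = n / 2) :
    ∃ l : ℕ → ℤ,
      l 1 = (k : ℤ) ∧
      (∀ t, 2 ≤ t → t ≤ n - 1 → 1 ≤ (l t).natAbs ∧ (l t).natAbs ≤ k - 1) ∧
      -- each magnitude j occurs exactly twice, with equal values at those occurrences
      (∀ j : ℕ, 1 ≤ j → j ≤ k - 1 →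
        ((Finset.Icc 1 (n - 1)).filter (fun t => (l t).natAbs = j)).card = 2 ∧
        (∀ t t', t ∈ Finset.Icc 1 (n - 1) → t' ∈ Finset.Icc 1 (n - 1) →
          (l t).natAbs = j → (l t').natAbs = j → l t = l t')) ∧
      -- partial sums S_0, …, S_{n-2} pairwise distinct mod n
      (∀ t₁ t₂, t₁ ≤ n - 2 → t₂ ≤ n - 2 →
        (((∑ i ∈ Finset.Icc 1 t₁, l i : ℤ) : ZMod n) =
          ((∑ i ∈ Finset.Icc 1 t₂, l i : ℤ) : ZMod n)) → t₁ = t₂) ∧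
      -- S_{n-1} ≡ 0 (mod n)
      ((n : ℤ) ∣ ∑ i ∈ Finset.Icc 1 (n - 1), l i) ∧
      -- equal lengths start at vertices of opposite parity
      (∀ t t', t ∈ Finset.Icc 1 (n - 1) → t' ∈ Finset.Icc 1 (n - 1) → t ≠ t' →
        l t = l t' →
        (∑ i ∈ Finset.Icc 1 (t - 1), l i) % 2 ≠ (∑ i ∈ Finset.Icc 1 (t' - 1), l i) % 2) := by
  obtain ⟨m, rfl⟩ : ∃ m, n = 4 * m := ⟨n / 4, by omega⟩
  have hm : 1 ≤ m := by omega
  have hk2 : k = 2 * m := by omega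
  subst hk2
  refine ⟨L m, ?_, ?_, ?_, ?_, ?_, ?_⟩
  · rw [L_one]; push_cast; ring
  · intro t h2 ht
    exact L_bound m t hm h2 (by omega)
  · intro j hj1 hj2
    have hj2' : j ≤ 2*m - 1 := by omega
    constructor
    · -- cardinality: the two positions of magnitude j
      rcases (show j = 1 ∨ (2 ≤ j ∧ j % 4 ≤ 1) ∨ (2 ≤ j ∧ 2 ≤ j % 4) by omega) with
        h | ⟨h2, h4'⟩ | ⟨h2, h4'⟩
      · subst h
        exact filter_eq m 1 2 3 (by omega) (by omega) (by omega) (by omega) (by omega)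
          (fun t h1 ht => mag1 m t hm h1 ht)
      · exact filter_eq m j j (j+2) (by omega) (by omega) (by omega) (by omega) (by omega)
          (fun t h1 ht => magA m t j hm h1 ht h2 hj2' h4')
      · exact filter_eq m j (4*m - j - 1) (4*m - j + 1) (by omega) (by omega) (by omega)
          (by omega) (by omega)
          (fun t h1 ht => magB m t j hm h1 ht h2 hj2' h4')
    · -- equal values
      intro t t' htI ht'I habs habs'
      simp only [Finset.mem_Icc] at htI ht'I
      have hL1 := L_one m
      have h2t : 2 ≤ t := by
        rcases Nat.lt_or_ge t 2 with h | h
        · exfalso; have ht1 : t = 1 := by omega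
          rw [ht1] at habs; omega
        · exact h
      have h2t' : 2 ≤ t' := by
        rcases Nat.lt_or_ge t' 2 with h | h
        · exfalso; have ht1 : t' = 1 := by omega
          rw [ht1] at habs'; omega
        · exact h
      have s1 := L_sign m t hm h2t htI.2
      have s2 := L_sign m t' hm h2t' ht'I.2
      omega
  · -- distinctness of partial sums mod n
    intro t₁ t₂ h1 h2 heq
    rw [sum_L, sum_L] at heq
    have hd : ((4*m : ℕ) : ℤ) ∣ S m t₂ - S m t₁ :=
      Int.ModEq.dvd ((ZMod.intCast_eq_intCast_iff _ _ _).mp heq)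
    obtain ⟨c, hc⟩ := hd
    have b1 := S_bound m t₁ hm (by omega)
    have b2 := S_bound m t₂ hm (by omega)
    have hmz : (1:ℤ) ≤ (m:ℤ) := by exact_mod_cast hm
    have hcast : ((4*m : ℕ) : ℤ) = 4*(m:ℤ) := by push_cast; ring
    rw [hcast] at hc
    have hc1 : c ≤ 1 := by
      by_contra hcon
      push_neg at hcon
      have h2c : (2:ℤ) ≤ c := by omega
      have hmul : (4*(m:ℤ)) * 2 ≤ 4*(m:ℤ) * c :=
        mul_le_mul_of_nonneg_left h2c (by linarith)
      linarith [b1.1, b1.2, b2.1, b2.2]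
    have hc2 : -1 ≤ c := by
      by_contra hcon
      push_neg at hcon
      have h2c : c ≤ (-2:ℤ) := by omega
      have hmul : 4*(m:ℤ) * c ≤ (4*(m:ℤ)) * (-2) :=
        mul_le_mul_of_nonneg_left h2c (by linarith)
      linarith [b1.1, b1.2, b2.1, b2.2]
    have hC : S m t₂ - S m t₁ = 0 ∨ S m t₂ - S m t₁ = 4*(m:ℤ) ∨
        S m t₂ - S m t₁ = -(4*(m:ℤ)) := by
      interval_cases c <;> omega
    simp only [S] at hC
    split_ifs at hC <;> omega
  · -- total sum divisible by n
    rw [sum_L, S_top m hm]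
    exact ⟨1, by push_cast; ring⟩
  · -- opposite parity of starting vertices
    intro t t' htI ht'I hne hval
    simp only [Finset.mem_Icc] at htI ht'I
    rw [sum_L, sum_L]
    have hL1 := L_one m
    have key : ∀ a b : ℕ, 1 ≤ a → a ≤ 4*m - 1 → 1 ≤ b → b ≤ 4*m - 1 → a ≠ b →
        L m a = L m b → 2 ≤ a := by
      intro a b ha1 ha2 hb1 hb2 hab hLab
      rcases Nat.lt_or_ge a 2 with h | h
      · exfalso
        have haa : a = 1 := by omega
        rw [haa] at hLab
        have hb2' : 2 ≤ b := by omega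
        have := L_bound m b hm hb2' hb2
        rw [← hLab, hL1] at this
        omega
      · exact h
    have h2t : 2 ≤ t := key t t' htI.1 htI.2 ht'I.1 ht'I.2 hne hval
    have h2t' : 2 ≤ t' := key t' t ht'I.1 ht'I.2 htI.1 htI.2 hne.symm hval.symm
    obtain ⟨j, hjt, hjt'⟩ : ∃ j, (L m t).natAbs = j ∧ (L m t').natAbs = j :=
      ⟨_, rfl, by rw [← hval]⟩
    have hjb := L_bound m t hm h2t htI.2
    have p1 := S_parity m (t - 1)
    have p2 := S_parity m (t' - 1)
    rcases (show j = 1 ∨ (2 ≤ j ∧ j % 4 ≤ 1) ∨ (2 ≤ j ∧ 2 ≤ j % 4) by omega) with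
      h | ⟨h2, h4'⟩ | ⟨h2, h4'⟩
    · have q1 := (mag1 m t hm htI.1 htI.2).mp (by omega)
      have q2 := (mag1 m t' hm ht'I.1 ht'I.2).mp (by omega)
      omega
    · have q1 := (magA m t j hm htI.1 htI.2 h2 (by omega) h4').mp hjt
      have q2 := (magA m t' j hm ht'I.1 ht'I.2 h2 (by omega) h4').mp hjt'
      omega
    · have q1 := (magB m t j hm htI.1 htI.2 h2 (by omega) h4').mp hjt
      have q2 := (magB m t' j hm ht'I.1 ht'I.2 h2 (by omega) h4').mp hjt'
      omega
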